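/- For the Freund 4-manifold with coordinates (α₁,β₁,α₂,β₂), the Fisher information metric is diagonal with entries g₁₁=1/(α₁²+α₁α₂), g₂₂=α₂/(β₁²(α₁+α₂)), g₃₃=1/(α₂²+α₁α₂), g₄₄=α₁/(β₂²(α₁+α₂)). -/

import Mathlib

open MeasureTheory Real
open Set Filter

/-- The Freund bivariate mixture exponential density. -/
noncomputable def freund (a1 b1 a2 b2 : ℝ) (x y : ℝ) : ℝ :=
  if 0 < x ∧ x < y then a1 * b2 * Real.exp (-b2 * y - (a1 + a2 - b2) * x)
  else if 0 < y ∧ y < x then a2 * b1 * Real.exp (-b1 * x - (a1 + a2 - b1) * y)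
  else 0

/-- Partial derivative in the `i`-th parameter. -/
noncomputable def pd (i : Fin 4) (F : (Fin 4 → ℝ) → ℝ) (p : Fin 4 → ℝ) : ℝ :=
  deriv (fun t => F (Function.update p i t)) (p i)

/-- Log-likelihood as a function of the parameters `(α₁, β₁, α₂, β₂)`. -/
noncomputable def ll (x y : ℝ) (p : Fin 4 → ℝ) : ℝ :=
  Real.log (freund (p 0) (p 1) (p 2) (p 3) x y)

/-- Fisher information: expectation of minus the Hessian of the log-likelihood. -/
noncomputable def fisher (p : Fin 4 → ℝ) (i j : Fin 4) : ℝ :=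
  -∫ x in Set.Ioi (0:ℝ), ∫ y in Set.Ioi (0:ℝ),
      pd i (pd j (ll x y)) p * freund (p 0) (p 1) (p 2) (p 3) x y

lemma expInt {b : ℝ} (hb : 0 < b) (a : ℝ) :
    ∫ y in Ioi a, Real.exp (-(b * y)) = Real.exp (-(b * a)) / b := by
  have hd : ∀ x ∈ Ioi a, HasDerivAt (fun y => -Real.exp (-(b*y)) / b) (Real.exp (-(b*x))) x := by
    intro x _
    have h : HasDerivAt (fun y : ℝ => -(b*y)) (-b) x := by
      exact (((hasDerivAt_id x).const_mul b).neg).congr_deriv (by simp)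
    have := (h.exp.neg.div_const b)
    refine this.congr_deriv ?_
    field_simp
  have hint : IntegrableOn (fun y => Real.exp (-(b*y))) (Ioi a) := by
    simpa [neg_mul] using exp_neg_integrableOn_Ioi a hb
  have htend : Tendsto (fun y => -Real.exp (-(b*y)) / b) atTop (nhds 0) := by
    have h1 : Tendsto (fun y : ℝ => b * y) atTop atTop :=
      Tendsto.const_mul_atTop hb tendsto_id
    have := (Real.tendsto_exp_neg_atTop_nhds_zero.comp h1).neg.div_const b
    simpa using this
  have := integral_Ioi_of_hasDerivAt_of_tendsto
    (Continuous.continuousWithinAt (by continuity))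
    hd hint htend
  rw [this]; ring

lemma xexpF_deriv {b : ℝ} (hb : 0 < b) (x : ℝ) :
    HasDerivAt (fun x => -((x/b + 1/b^2) * Real.exp (-(b*x)))) (x * Real.exp (-(b*x))) x := by
  have h1 : HasDerivAt (fun x : ℝ => x/b + 1/b^2) (1/b) x :=
    ((hasDerivAt_id x).div_const b).add_const _
  have h2 : HasDerivAt (fun x : ℝ => Real.exp (-(b*x))) (Real.exp (-(b*x)) * (-b)) x := by
    have h : HasDerivAt (fun y : ℝ => -(b*y)) (-b) x := by
      exact (((hasDerivAt_id x).const_mul b).neg).congr_deriv (by simp)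
    exact h.exp
  have := (h1.mul h2).neg
  refine this.congr_deriv ?_
  field_simp
  ring

lemma xexpF_tendsto {b : ℝ} (hb : 0 < b) :
    Tendsto (fun x => -((x/b + 1/b^2) * Real.exp (-(b*x)))) atTop (nhds 0) := by
  have h1 : Tendsto (fun y : ℝ => b * y) atTop atTop := Tendsto.const_mul_atTop hb tendsto_id
  have h2 := (Real.tendsto_pow_mul_exp_neg_atTop_nhds_zero 1).comp h1
  have h3 := Real.tendsto_exp_neg_atTop_nhds_zero.comp h1
  have := (((h2.const_mul (1/b^2)).add (h3.const_mul (1/b^2))).neg)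
  simp only [Function.comp] at this h2 h3
  convert this using 2 with x
  · field_simp
  · simp

lemma xexpIntegrable {b : ℝ} (hb : 0 < b) :
    IntegrableOn (fun x => x * Real.exp (-(b*x))) (Ioi (0:ℝ)) :=
  integrableOn_Ioi_deriv_of_nonneg'
    (fun x _ => xexpF_deriv hb x)
    (fun x hx => mul_nonneg (le_of_lt hx) (Real.exp_pos _).le)
    (xexpF_tendsto hb)

lemma xexpInt {b : ℝ} (hb : 0 < b) :
    ∫ x in Ioi (0:ℝ), x * Real.exp (-(b*x)) = 1/b^2 := by
  have := integral_Ioi_of_hasDerivAt_of_nonneg'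
    (fun x _ => xexpF_deriv hb x)
    (fun x hx => mul_nonneg (le_of_lt hx) (Real.exp_pos _).le)
    (xexpF_tendsto hb)
  rw [this]; simp

lemma iooInt_ne {k : ℝ} (hk : k ≠ 0) {x : ℝ} (hx : 0 ≤ x) :
    ∫ y in Ioo (0:ℝ) x, Real.exp (-(k*y)) = (1 - Real.exp (-(k*x)))/k := by
  rw [← integral_Ioc_eq_integral_Ioo, ← intervalIntegral.integral_of_le hx]
  have hd : ∀ y ∈ uIcc (0:ℝ) x, HasDerivAt (fun y => -Real.exp (-(k*y))/k) (Real.exp (-(k*y))) y := by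
    intro y _
    have h : HasDerivAt (fun z : ℝ => -(k*z)) (-k) y := by
      exact (((hasDerivAt_id y).const_mul k).neg).congr_deriv (by simp)
    have := h.exp.neg.div_const k
    refine this.congr_deriv ?_
    field_simp
  rw [intervalIntegral.integral_eq_sub_of_hasDerivAt hd ((Real.continuous_exp.comp (by continuity)).intervalIntegrable 0 x)]
  simp
  field_simp
  ring

lemma iooInt_zero {x : ℝ} (hx : 0 ≤ x) :
    ∫ y in Ioo (0:ℝ) x, Real.exp (-((0:ℝ)*y)) = x := by
  simp [Real.volume_Ioo, hx]

lemma deriv_of_eventually_const {f : ℝ → ℝ} {a c : ℝ} (h : ∀ᶠ t in nhds a, f t = c) :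
    deriv f a = 0 := by
  have he : f =ᶠ[nhds a] fun _ => c := h
  rw [he.deriv_eq, deriv_const]

section region1
variable {x y : ℝ} (hx : 0 < x) (hxy : x < y)

include hx hxy in
lemma ll_r1 (q : Fin 4 → ℝ) (h0 : q 0 ≠ 0) (h3 : q 3 ≠ 0) :
    ll x y q = Real.log (q 0) + Real.log (q 3) + (-q 3 * y - (q 0 + q 2 - q 3) * x) := by
  unfold ll freund
  rw [if_pos ⟨hx, hxy⟩, Real.log_mul (mul_ne_zero h0 h3) (Real.exp_ne_zero _),
    Real.log_mul h0 h3, Real.log_exp]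

include hx hxy in
lemma pd0_r1 (q : Fin 4 → ℝ) (h0 : q 0 ≠ 0) (h3 : q 3 ≠ 0) :
    pd 0 (ll x y) q = (q 0)⁻¹ - x := by
  unfold pd
  have hev : (fun t => ll x y (Function.update q 0 t)) =ᶠ[nhds (q 0)]
      (fun t => Real.log t + Real.log (q 3) + (-q 3 * y - (t + q 2 - q 3) * x)) := by
    filter_upwards [eventually_ne_nhds h0] with t ht
    rw [ll_r1 hx hxy _ (by simpa using ht) (by simpa using h3)]
    simp
  rw [hev.deriv_eq]
  have H : HasDerivAt (fun t => Real.log t + Real.log (q 3) + (-q 3 * y - (t + q 2 - q 3) * x))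
      ((q 0)⁻¹ - x) (q 0) := by
    have h1 := (Real.hasDerivAt_log h0).add_const (Real.log (q 3))
    have h2 : HasDerivAt (fun t : ℝ => -q 3 * y - (t + q 2 - q 3) * x) (-x) (q 0) := by
      have h3' : HasDerivAt (fun t : ℝ => (t + q 2 - q 3) * x) x (q 0) := by
        simpa using (((hasDerivAt_id (q 0)).add_const (q 2)).sub_const (q 3)).mul_const x
      simpa using h3'.const_sub (-q 3 * y)
    exact (h1.add h2).congr_deriv (by ring)
  exact H.deriv

include hx hxy in
lemma pd1_r1 (q : Fin 4 → ℝ) : pd 1 (ll x y) q = 0 := by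
  unfold pd
  have : (fun t => ll x y (Function.update q 1 t)) = fun _ => ll x y q := by
    funext t
    unfold ll freund
    simp [hx, hxy]
  rw [this, deriv_const]

include hx hxy in
lemma pd2_r1 (q : Fin 4 → ℝ) (h0 : q 0 ≠ 0) (h3 : q 3 ≠ 0) :
    pd 2 (ll x y) q = -x := by
  unfold pd
  have hfe : (fun t => ll x y (Function.update q 2 t)) =
      (fun t => Real.log (q 0) + Real.log (q 3) + (-q 3 * y - (q 0 + t - q 3) * x)) := by
    funext t
    rw [ll_r1 hx hxy _ (by simpa using h0) (by simpa using h3)]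
    simp
  rw [hfe]
  have H : HasDerivAt (fun t => Real.log (q 0) + Real.log (q 3) + (-q 3 * y - (q 0 + t - q 3) * x))
      (-x) (q 2) := by
    have h3' : HasDerivAt (fun t : ℝ => (q 0 + t - q 3) * x) x (q 2) := by
      simpa using (((hasDerivAt_id (q 2)).const_add (q 0)).sub_const (q 3)).mul_const x
    simpa using (h3'.const_sub (-q 3 * y)).const_add (Real.log (q 0) + Real.log (q 3))
  exact H.deriv

include hx hxy in
lemma pd3_r1 (q : Fin 4 → ℝ) (h0 : q 0 ≠ 0) (h3 : q 3 ≠ 0) :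
    pd 3 (ll x y) q = (q 3)⁻¹ + (x - y) := by
  unfold pd
  have hev : (fun t => ll x y (Function.update q 3 t)) =ᶠ[nhds (q 3)]
      (fun t => Real.log (q 0) + Real.log t + (-t * y - (q 0 + q 2 - t) * x)) := by
    filter_upwards [eventually_ne_nhds h3] with t ht
    rw [ll_r1 hx hxy _ (by simpa using h0) (by simpa using ht)]
    simp
  rw [hev.deriv_eq]
  have H : HasDerivAt (fun t => Real.log (q 0) + Real.log t + (-t * y - (q 0 + q 2 - t) * x))
      ((q 3)⁻¹ + (x - y)) (q 3) := by
    have h1 := ((Real.hasDerivAt_log h3).const_add (Real.log (q 0)))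
    have h2 : HasDerivAt (fun t : ℝ => -t * y - (q 0 + q 2 - t) * x) (x - y) (q 3) := by
      have ha : HasDerivAt (fun t : ℝ => -t * y) (-y) (q 3) := by
        simpa using ((hasDerivAt_id (q 3)).neg.mul_const y)
      have hb : HasDerivAt (fun t : ℝ => (q 0 + q 2 - t) * x) (-x) (q 3) := by
        simpa using ((hasDerivAt_id (q 3)).const_sub (q 0 + q 2)).mul_const x
      have := ha.sub hb
      exact this.congr_deriv (by ring)
    have := h1.add h2
    exact this.congr_deriv (by ring)
  exact H.deriv

end region1

section region2
variable {x y : ℝ} (hy : 0 < y) (hyx : y < x)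

include hy hyx in
lemma ll_r2 (q : Fin 4 → ℝ) (h1 : q 1 ≠ 0) (h2 : q 2 ≠ 0) :
    ll x y q = Real.log (q 2) + Real.log (q 1) + (-q 1 * x - (q 0 + q 2 - q 1) * y) := by
  unfold ll freund
  have hnot : ¬ (0 < x ∧ x < y) := by
    rintro ⟨_, h⟩; exact absurd (h.trans hyx) (lt_irrefl x)
  rw [if_neg hnot, if_pos ⟨hy, hyx⟩, Real.log_mul (mul_ne_zero h2 h1) (Real.exp_ne_zero _),
    Real.log_mul h2 h1, Real.log_exp]

include hy hyx in
lemma pd0_r2 (q : Fin 4 → ℝ) (h1 : q 1 ≠ 0) (h2 : q 2 ≠ 0) :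
    pd 0 (ll x y) q = -y := by
  unfold pd
  have hfe : (fun t => ll x y (Function.update q 0 t)) =
      (fun t => Real.log (q 2) + Real.log (q 1) + (-q 1 * x - (t + q 2 - q 1) * y)) := by
    funext t
    rw [ll_r2 hy hyx _ (by simpa using h1) (by simpa using h2)]
    simp
  rw [hfe]
  have H : HasDerivAt (fun t => Real.log (q 2) + Real.log (q 1) + (-q 1 * x - (t + q 2 - q 1) * y))
      (-y) (q 0) := by
    have h3' : HasDerivAt (fun t : ℝ => (t + q 2 - q 1) * y) y (q 0) := by
      simpa using (((hasDerivAt_id (q 0)).add_const (q 2)).sub_const (q 1)).mul_const y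
    simpa using (h3'.const_sub (-q 1 * x)).const_add (Real.log (q 2) + Real.log (q 1))
  exact H.deriv

include hy hyx in
lemma pd1_r2 (q : Fin 4 → ℝ) (h1 : q 1 ≠ 0) (h2 : q 2 ≠ 0) :
    pd 1 (ll x y) q = (q 1)⁻¹ + (y - x) := by
  unfold pd
  have hev : (fun t => ll x y (Function.update q 1 t)) =ᶠ[nhds (q 1)]
      (fun t => Real.log (q 2) + Real.log t + (-t * x - (q 0 + q 2 - t) * y)) := by
    filter_upwards [eventually_ne_nhds h1] with t ht
    rw [ll_r2 hy hyx _ (by simpa using ht) (by simpa using h2)]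
    simp
  rw [hev.deriv_eq]
  have H : HasDerivAt (fun t => Real.log (q 2) + Real.log t + (-t * x - (q 0 + q 2 - t) * y))
      ((q 1)⁻¹ + (y - x)) (q 1) := by
    have ha := ((Real.hasDerivAt_log h1).const_add (Real.log (q 2)))
    have hb : HasDerivAt (fun t : ℝ => -t * x - (q 0 + q 2 - t) * y) (y - x) (q 1) := by
      have hc : HasDerivAt (fun t : ℝ => -t * x) (-x) (q 1) := by
        simpa using ((hasDerivAt_id (q 1)).neg.mul_const x)
      have hd : HasDerivAt (fun t : ℝ => (q 0 + q 2 - t) * y) (-y) (q 1) := by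
        simpa using ((hasDerivAt_id (q 1)).const_sub (q 0 + q 2)).mul_const y
      have := hc.sub hd
      exact this.congr_deriv (by ring)
    have := ha.add hb
    exact this.congr_deriv (by ring)
  exact H.deriv

include hy hyx in
lemma pd2_r2 (q : Fin 4 → ℝ) (h1 : q 1 ≠ 0) (h2 : q 2 ≠ 0) :
    pd 2 (ll x y) q = (q 2)⁻¹ - y := by
  unfold pd
  have hev : (fun t => ll x y (Function.update q 2 t)) =ᶠ[nhds (q 2)]
      (fun t => Real.log t + Real.log (q 1) + (-q 1 * x - (q 0 + t - q 1) * y)) := by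
    filter_upwards [eventually_ne_nhds h2] with t ht
    rw [ll_r2 hy hyx _ (by simpa using h1) (by simpa using ht)]
    simp
  rw [hev.deriv_eq]
  have H : HasDerivAt (fun t => Real.log t + Real.log (q 1) + (-q 1 * x - (q 0 + t - q 1) * y))
      ((q 2)⁻¹ - y) (q 2) := by
    have ha := ((Real.hasDerivAt_log h2).add_const (Real.log (q 1)))
    have hb : HasDerivAt (fun t : ℝ => -q 1 * x - (q 0 + t - q 1) * y) (-y) (q 2) := by
      have h3' : HasDerivAt (fun t : ℝ => (q 0 + t - q 1) * y) y (q 2) := by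
        simpa using (((hasDerivAt_id (q 2)).const_add (q 0)).sub_const (q 1)).mul_const y
      simpa using h3'.const_sub (-q 1 * x)
    exact (ha.add hb).congr_deriv (by ring)
  exact H.deriv

include hy hyx in
lemma pd3_r2 (q : Fin 4 → ℝ) : pd 3 (ll x y) q = 0 := by
  unfold pd
  have : (fun t => ll x y (Function.update q 3 t)) = fun _ => ll x y q := by
    funext t
    unfold ll freund
    have hnot : ¬ (0 < x ∧ x < y) := by
      rintro ⟨_, h⟩; exact absurd (h.trans hyx) (lt_irrefl x)
    simp [hnot, hy, hyx]
  rw [this, deriv_const]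

end region2

lemma pd_def (i : Fin 4) (F : (Fin 4 → ℝ) → ℝ) (p : Fin 4 → ℝ) :
    pd i F p = deriv (fun t => F (Function.update p i t)) (p i) := rfl

lemma hess_r1 (p : Fin 4 → ℝ) (hp : ∀ i, 0 < p i) {x y : ℝ} (hx : 0 < x) (hxy : x < y)
    (i j : Fin 4) :
    pd i (pd j (ll x y)) p = Matrix.diagonal ![-((p 0)^2)⁻¹, 0, 0, -((p 3)^2)⁻¹] i j := by
  have e0 := (hp 0).ne'
  have e3 := (hp 3).ne'
  fin_cases i <;> fin_cases j <;> simp [Matrix.diagonal]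
  -- (0,0)
  · rw [pd_def]
    have hev : (fun t => pd 0 (ll x y) (Function.update p 0 t)) =ᶠ[nhds (p 0)]
        (fun t => t⁻¹ - x) := by
      filter_upwards [eventually_ne_nhds e0] with t ht
      rw [pd0_r1 hx hxy _ (by simpa using ht) (by simpa using e3)]
      simp
    rw [hev.deriv_eq]
    simpa using ((hasDerivAt_inv e0).sub_const x).deriv
  -- (0,1)
  · rw [pd_def]
    exact deriv_of_eventually_const (c := 0)
      (Filter.Eventually.of_forall (fun t => pd1_r1 hx hxy _))
  -- (0,2)
  · rw [pd_def]
    apply deriv_of_eventually_const (c := -x)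
    filter_upwards [eventually_ne_nhds e0] with t ht
    rw [pd2_r1 hx hxy _ (by simpa using ht) (by simpa using e3)]
  -- (0,3)
  · rw [pd_def]
    apply deriv_of_eventually_const (c := (p 3)⁻¹ + (x - y))
    filter_upwards [eventually_ne_nhds e0] with t ht
    rw [pd3_r1 hx hxy _ (by simpa using ht) (by simpa using e3)]
    simp
  -- (1,0)
  · rw [pd_def]
    apply deriv_of_eventually_const (c := (p 0)⁻¹ - x)
    filter_upwards with t
    rw [pd0_r1 hx hxy _ (by simpa using e0) (by simpa using e3)]
    simp
  -- (1,1)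
  · rw [pd_def]
    exact deriv_of_eventually_const (c := 0)
      (Filter.Eventually.of_forall (fun t => pd1_r1 hx hxy _))
  -- (1,2)
  · rw [pd_def]
    apply deriv_of_eventually_const (c := -x)
    filter_upwards with t
    rw [pd2_r1 hx hxy _ (by simpa using e0) (by simpa using e3)]
  -- (1,3)
  · rw [pd_def]
    apply deriv_of_eventually_const (c := (p 3)⁻¹ + (x - y))
    filter_upwards with t
    rw [pd3_r1 hx hxy _ (by simpa using e0) (by simpa using e3)]
    simp
  -- (2,0)
  · rw [pd_def]
    apply deriv_of_eventually_const (c := (p 0)⁻¹ - x)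
    filter_upwards with t
    rw [pd0_r1 hx hxy _ (by simpa using e0) (by simpa using e3)]
    simp
  -- (2,1)
  · rw [pd_def]
    exact deriv_of_eventually_const (c := 0)
      (Filter.Eventually.of_forall (fun t => pd1_r1 hx hxy _))
  -- (2,2)
  · rw [pd_def]
    apply deriv_of_eventually_const (c := -x)
    filter_upwards with t
    rw [pd2_r1 hx hxy _ (by simpa using e0) (by simpa using e3)]
  -- (2,3)
  · rw [pd_def]
    apply deriv_of_eventually_const (c := (p 3)⁻¹ + (x - y))
    filter_upwards with t
    rw [pd3_r1 hx hxy _ (by simpa using e0) (by simpa using e3)]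
    simp
  -- (3,0)
  · rw [pd_def]
    apply deriv_of_eventually_const (c := (p 0)⁻¹ - x)
    filter_upwards [eventually_ne_nhds e3] with t ht
    rw [pd0_r1 hx hxy _ (by simpa using e0) (by simpa using ht)]
    simp
  -- (3,1)
  · rw [pd_def]
    exact deriv_of_eventually_const (c := 0)
      (Filter.Eventually.of_forall (fun t => pd1_r1 hx hxy _))
  -- (3,2)
  · rw [pd_def]
    apply deriv_of_eventually_const (c := -x)
    filter_upwards [eventually_ne_nhds e3] with t ht
    rw [pd2_r1 hx hxy _ (by simpa using e0) (by simpa using ht)]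
  -- (3,3)
  · rw [pd_def]
    have hev : (fun t => pd 3 (ll x y) (Function.update p 3 t)) =ᶠ[nhds (p 3)]
        (fun t => t⁻¹ + (x - y)) := by
      filter_upwards [eventually_ne_nhds e3] with t ht
      rw [pd3_r1 hx hxy _ (by simpa using e0) (by simpa using ht)]
      simp
    rw [hev.deriv_eq]
    simpa using ((hasDerivAt_inv e3).add_const (x - y)).deriv

lemma hess_r2 (p : Fin 4 → ℝ) (hp : ∀ i, 0 < p i) {x y : ℝ} (hy : 0 < y) (hyx : y < x)
    (i j : Fin 4) :
    pd i (pd j (ll x y)) p = Matrix.diagonal ![0, -((p 1)^2)⁻¹, -((p 2)^2)⁻¹, 0] i j := by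
  have e1 := (hp 1).ne'
  have e2 := (hp 2).ne'
  fin_cases i <;> fin_cases j <;> simp [Matrix.diagonal]
  -- (0,0)
  · rw [pd_def]
    apply deriv_of_eventually_const (c := -y)
    filter_upwards with t
    rw [pd0_r2 hy hyx _ (by simpa using e1) (by simpa using e2)]
  -- (0,1)
  · rw [pd_def]
    apply deriv_of_eventually_const (c := (p 1)⁻¹ + (y - x))
    filter_upwards with t
    rw [pd1_r2 hy hyx _ (by simpa using e1) (by simpa using e2)]
    simp
  -- (0,2)
  · rw [pd_def]
    apply deriv_of_eventually_const (c := (p 2)⁻¹ - y)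
    filter_upwards with t
    rw [pd2_r2 hy hyx _ (by simpa using e1) (by simpa using e2)]
    simp
  -- (0,3)
  · rw [pd_def]
    exact deriv_of_eventually_const (c := 0)
      (Filter.Eventually.of_forall (fun t => pd3_r2 hy hyx _))
  -- (1,0)
  · rw [pd_def]
    apply deriv_of_eventually_const (c := -y)
    filter_upwards [eventually_ne_nhds e1] with t ht
    rw [pd0_r2 hy hyx _ (by simpa using ht) (by simpa using e2)]
  -- (1,1)
  · rw [pd_def]
    have hev : (fun t => pd 1 (ll x y) (Function.update p 1 t)) =ᶠ[nhds (p 1)]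
        (fun t => t⁻¹ + (y - x)) := by
      filter_upwards [eventually_ne_nhds e1] with t ht
      rw [pd1_r2 hy hyx _ (by simpa using ht) (by simpa using e2)]
      simp
    rw [hev.deriv_eq]
    simpa using ((hasDerivAt_inv e1).add_const (y - x)).deriv
  -- (1,2)
  · rw [pd_def]
    apply deriv_of_eventually_const (c := (p 2)⁻¹ - y)
    filter_upwards [eventually_ne_nhds e1] with t ht
    rw [pd2_r2 hy hyx _ (by simpa using ht) (by simpa using e2)]
    simp
  -- (1,3)
  · rw [pd_def]
    exact deriv_of_eventually_const (c := 0)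
      (Filter.Eventually.of_forall (fun t => pd3_r2 hy hyx _))
  -- (2,0)
  · rw [pd_def]
    apply deriv_of_eventually_const (c := -y)
    filter_upwards [eventually_ne_nhds e2] with t ht
    rw [pd0_r2 hy hyx _ (by simpa using e1) (by simpa using ht)]
  -- (2,1)
  · rw [pd_def]
    apply deriv_of_eventually_const (c := (p 1)⁻¹ + (y - x))
    filter_upwards [eventually_ne_nhds e2] with t ht
    rw [pd1_r2 hy hyx _ (by simpa using e1) (by simpa using ht)]
    simp
  -- (2,2)
  · rw [pd_def]
    have hev : (fun t => pd 2 (ll x y) (Function.update p 2 t)) =ᶠ[nhds (p 2)]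
        (fun t => t⁻¹ - y) := by
      filter_upwards [eventually_ne_nhds e2] with t ht
      rw [pd2_r2 hy hyx _ (by simpa using e1) (by simpa using ht)]
      simp
    rw [hev.deriv_eq]
    simpa using ((hasDerivAt_inv e2).sub_const y).deriv
  -- (2,3)
  · rw [pd_def]
    exact deriv_of_eventually_const (c := 0)
      (Filter.Eventually.of_forall (fun t => pd3_r2 hy hyx _))
  -- (3,0)
  · rw [pd_def]
    apply deriv_of_eventually_const (c := -y)
    filter_upwards with t
    rw [pd0_r2 hy hyx _ (by simpa using e1) (by simpa using e2)]
  -- (3,1)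
  · rw [pd_def]
    apply deriv_of_eventually_const (c := (p 1)⁻¹ + (y - x))
    filter_upwards with t
    rw [pd1_r2 hy hyx _ (by simpa using e1) (by simpa using e2)]
    simp
  -- (3,2)
  · rw [pd_def]
    apply deriv_of_eventually_const (c := (p 2)⁻¹ - y)
    filter_upwards with t
    rw [pd2_r2 hy hyx _ (by simpa using e1) (by simpa using e2)]
    simp
  -- (3,3)
  · rw [pd_def]
    exact deriv_of_eventually_const (c := 0)
      (Filter.Eventually.of_forall (fun t => pd3_r2 hy hyx _))

set_option maxHeartbeats 1000000 in
lemma fisher_integral (p : Fin 4 → ℝ) (hp : ∀ i, 0 < p i) (i j : Fin 4) (c d : ℝ)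
    (h1 : ∀ x y : ℝ, 0 < x → x < y → pd i (pd j (ll x y)) p = c)
    (h2 : ∀ x y : ℝ, 0 < y → y < x → pd i (pd j (ll x y)) p = d) :
    fisher p i j = -(c * (p 0 / (p 0 + p 2)) + d * (p 2 / (p 0 + p 2))) := by
  have hS : (0:ℝ) < p 0 + p 2 := add_pos (hp 0) (hp 2)
  have hinner : Set.EqOn
      (fun x => ∫ y in Ioi (0:ℝ), pd i (pd j (ll x y)) p * freund (p 0) (p 1) (p 2) (p 3) x y)
      (fun x => c * p 0 * Real.exp (-((p 0 + p 2) * x))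
        + d * (p 2 * p 1 * Real.exp (-(p 1 * x)))
          * (∫ y in Ioo (0:ℝ) x, Real.exp (-((p 0 + p 2 - p 1) * y)))) (Ioi (0:ℝ)) := by
    intro x hx
    rw [mem_Ioi] at hx
    dsimp only
    have hEq1 : Set.EqOn (fun y => pd i (pd j (ll x y)) p * freund (p 0) (p 1) (p 2) (p 3) x y)
        (fun y => (c * (p 0 * p 3 * Real.exp (-((p 0 + p 2 - p 3) * x)))) * Real.exp (-(p 3 * y)))
        (Ioi x) := by
      intro y hy
      rw [mem_Ioi] at hy
      simp only
      rw [h1 x y hx hy]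
      unfold freund
      rw [if_pos ⟨hx, hy⟩]
      rw [show -p 3 * y - (p 0 + p 2 - p 3) * x = -((p 0 + p 2 - p 3) * x) + -(p 3 * y) by ring,
        Real.exp_add]
      ring
    have hEq2 : Set.EqOn (fun y => pd i (pd j (ll x y)) p * freund (p 0) (p 1) (p 2) (p 3) x y)
        (fun y => (d * (p 2 * p 1 * Real.exp (-(p 1 * x))))
          * Real.exp (-((p 0 + p 2 - p 1) * y))) (Ioo 0 x) := by
      intro y hy
      obtain ⟨hy0, hyx⟩ := hy
      simp only
      rw [h2 x y hy0 hyx]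
      unfold freund
      rw [if_neg (by rintro ⟨_, h⟩; exact absurd (h.trans hyx) (lt_irrefl x)),
        if_pos ⟨hy0, hyx⟩]
      rw [show -p 1 * x - (p 0 + p 2 - p 1) * y = -(p 1 * x) + -((p 0 + p 2 - p 1) * y) by ring,
        Real.exp_add]
      ring
    have base1 : IntegrableOn (fun y => Real.exp (-(p 3 * y))) (Ioi x) := by
      have := exp_neg_integrableOn_Ioi x (hp 3); simp only [neg_mul] at this; exact this
    have int1 : IntegrableOn
        (fun y => pd i (pd j (ll x y)) p * freund (p 0) (p 1) (p 2) (p 3) x y) (Ioi x) :=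
      IntegrableOn.congr_fun
        (base1.const_mul (c * (p 0 * p 3 * Real.exp (-((p 0 + p 2 - p 3) * x)))))
        hEq1.symm measurableSet_Ioi
    have base2 : IntegrableOn (fun y => Real.exp (-((p 0 + p 2 - p 1) * y))) (Ioo 0 x) :=
      ((Real.continuous_exp.comp (by continuity)).integrableOn_Ioc).mono_set
        Ioo_subset_Ioc_self
    have int2 : IntegrableOn
        (fun y => pd i (pd j (ll x y)) p * freund (p 0) (p 1) (p 2) (p 3) x y) (Ioc 0 x) := by
      rw [integrableOn_Ioc_iff_integrableOn_Ioo]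
      exact IntegrableOn.congr_fun
        (base2.const_mul (d * (p 2 * p 1 * Real.exp (-(p 1 * x)))))
        hEq2.symm measurableSet_Ioo
    rw [show Ioi (0:ℝ) = Ioc 0 x ∪ Ioi x from (Ioc_union_Ioi_eq_Ioi hx.le).symm,
      setIntegral_union Ioc_disjoint_Ioi_same measurableSet_Ioi int2 int1,
      integral_Ioc_eq_integral_Ioo,
      setIntegral_congr_fun measurableSet_Ioo hEq2,
      setIntegral_congr_fun measurableSet_Ioi hEq1,
      integral_const_mul, integral_const_mul, expInt (hp 3) x]
    have hE : Real.exp (-((p 0 + p 2 - p 3) * x)) * Real.exp (-(p 3 * x))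
        = Real.exp (-((p 0 + p 2) * x)) := by
      rw [← Real.exp_add]; congr 1; ring
    have hp3 := (hp 3).ne'
    field_simp
    ring_nf at hE ⊢
    linear_combination (c * p 0) * hE
  unfold fisher
  rw [setIntegral_congr_fun measurableSet_Ioi hinner]
  rcases eq_or_ne (p 0 + p 2 - p 1) 0 with hk | hk
  · -- p 1 = p 0 + p 2
    have hp1 : p 1 = p 0 + p 2 := by linarith
    have hEq : Set.EqOn (fun x => c * p 0 * Real.exp (-((p 0 + p 2) * x))
          + d * (p 2 * p 1 * Real.exp (-(p 1 * x)))
            * (∫ y in Ioo (0:ℝ) x, Real.exp (-((p 0 + p 2 - p 1) * y))))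
        (fun x => c * p 0 * Real.exp (-((p 0 + p 2) * x))
          + (d * (p 2 * p 1)) * (x * Real.exp (-(p 1 * x)))) (Ioi (0:ℝ)) := by
      intro x hx
      rw [mem_Ioi] at hx
      dsimp only
      rw [hk, iooInt_zero (le_of_lt hx)]
      ring
    rw [setIntegral_congr_fun measurableSet_Ioi hEq]
    have ib1 : IntegrableOn (fun x : ℝ => Real.exp (-((p 0 + p 2) * x))) (Ioi (0:ℝ)) := by
      have := exp_neg_integrableOn_Ioi 0 hS; simp only [neg_mul] at this; exact this
    rw [MeasureTheory.integral_add (ib1.const_mul (c * p 0))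
        ((xexpIntegrable (hp 1)).const_mul (d * (p 2 * p 1))),
      integral_const_mul, integral_const_mul, expInt hS 0, xexpInt (hp 1)]
    have h0 := (hp 0).ne'
    have h1' := (hp 1).ne'
    have hS' := hS.ne'
    simp only [mul_zero, neg_zero, Real.exp_zero]
    rw [hp1]
    field_simp
  · have hEq : Set.EqOn (fun x => c * p 0 * Real.exp (-((p 0 + p 2) * x))
          + d * (p 2 * p 1 * Real.exp (-(p 1 * x)))
            * (∫ y in Ioo (0:ℝ) x, Real.exp (-((p 0 + p 2 - p 1) * y))))
        (fun x => (c * p 0 - d * (p 2 * p 1) / (p 0 + p 2 - p 1))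
            * Real.exp (-((p 0 + p 2) * x))
          + (d * (p 2 * p 1) / (p 0 + p 2 - p 1)) * Real.exp (-(p 1 * x))) (Ioi (0:ℝ)) := by
      intro x hx
      rw [mem_Ioi] at hx
      dsimp only
      rw [iooInt_ne hk (le_of_lt hx)]
      have hE : Real.exp (-(p 1 * x)) * Real.exp (-((p 0 + p 2 - p 1) * x))
          = Real.exp (-((p 0 + p 2) * x)) := by
        rw [← Real.exp_add]; congr 1; ring
      field_simp
      ring_nf at hE ⊢
      linear_combination (-(d * (p 2 * p 1))) * hE
    rw [setIntegral_congr_fun measurableSet_Ioi hEq]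
    have ib1 : IntegrableOn (fun x : ℝ => Real.exp (-((p 0 + p 2) * x))) (Ioi (0:ℝ)) := by
      have := exp_neg_integrableOn_Ioi 0 hS; simp only [neg_mul] at this; exact this
    have ib2 : IntegrableOn (fun x : ℝ => Real.exp (-(p 1 * x))) (Ioi (0:ℝ)) := by
      have := exp_neg_integrableOn_Ioi 0 (hp 1); simp only [neg_mul] at this; exact this
    rw [MeasureTheory.integral_add
        (ib1.const_mul (c * p 0 - d * (p 2 * p 1) / (p 0 + p 2 - p 1)))
        (ib2.const_mul (d * (p 2 * p 1) / (p 0 + p 2 - p 1))),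
      integral_const_mul, integral_const_mul, expInt hS 0, expInt (hp 1) 0]
    have h1' := (hp 1).ne'
    have hS' := hS.ne'
    simp only [mul_zero, neg_zero, Real.exp_zero]
    field_simp
    ring

theorem freund_fisher_metric (p : Fin 4 → ℝ) (hp : ∀ i, 0 < p i) :
    ∀ i j : Fin 4, fisher p i j =
      Matrix.diagonal
        ![1 / ((p 0) ^ 2 + p 0 * p 2),
          p 2 / ((p 1) ^ 2 * (p 0 + p 2)),
          1 / ((p 2) ^ 2 + p 0 * p 2),
          p 0 / ((p 3) ^ 2 * (p 0 + p 2))] i j := by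
  intro i j
  rw [fisher_integral p hp i j _ _
    (fun x y hx hxy => hess_r1 p hp hx hxy i j)
    (fun x y hy hyx => hess_r2 p hp hy hyx i j)]
  have h0 := (hp 0).ne'
  have h1 := (hp 1).ne'
  have h2 := (hp 2).ne'
  have h3 := (hp 3).ne'
  have hS := (add_pos (hp 0) (hp 2)).ne'
  have hA : p 0 ^ 2 + p 0 * p 2 ≠ 0 :=
    (add_pos (pow_pos (hp 0) 2) (mul_pos (hp 0) (hp 2))).ne'
  have hB : p 2 ^ 2 + p 0 * p 2 ≠ 0 :=
    (add_pos (pow_pos (hp 2) 2) (mul_pos (hp 0) (hp 2))).ne'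
  fin_cases i <;> fin_cases j <;> simp [Matrix.diagonal] <;> field_simp <;> ring_nf <;> field_simp
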